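/- arXiv:2407.01353 — 3 statements merged into one kernel-verified Lean document; each statement's English description precedes it below -/
import Mathlib

section
/- Let P be a polytope in R^n (n ≥ 1) with nonempty interior such that P is a pyramid over each of its facets (i.e., for every facet F of P, the vertex set of P not contained in F consists of exactly one point). Then P is a simplex, i.e., P has exactly n+1 vertices which are affinely independent. -/
open Module Set Finset

private lemma exists_dual_functional' {n : ℕ} (W : Submodule ℝ (Fin n → ℝ)) {x : Fin n → ℝ}
    (hx : x ∉ W) :
    ∃ φ : (Fin n → ℝ) →L[ℝ] ℝ, (∀ w ∈ W, φ w = 0) ∧ φ x = 1 := by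
  obtain ⟨f, u, hfx, hf⟩ := geometric_hahn_banach_point_closed W.convex
    (Submodule.closed_of_finiteDimensional W) hx
  have hW0 : ∀ w ∈ W, f w = 0 := by
    intro w hw
    by_contra h
    have := hf (((u - 1) / f w) • w) (W.smul_mem _ hw)
    rw [map_smul, smul_eq_mul, div_mul_cancel₀ _ h] at this
    linarith
  have hu : u < 0 := by simpa using hf 0 W.zero_mem
  have hfx0 : f x ≠ 0 := by intro h; rw [h] at hfx; linarith
  refine ⟨(f x)⁻¹ • f, fun w hw => ?_, ?_⟩
  · simp [hW0 w hw]
  · simp [inv_mul_cancel₀ hfx0]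

private lemma mem_convexHull_filter' {n : ℕ} (s : Finset (Fin n → ℝ))
    (l : (Fin n → ℝ) →L[ℝ] ℝ) (c : ℝ) (hle : ∀ u ∈ s, l u ≤ c) {x : Fin n → ℝ}
    (hx : x ∈ convexHull ℝ (s : Set (Fin n → ℝ))) (hxc : l x = c) :
    x ∈ convexHull ℝ ((s.filter (fun u => l u = c)) : Set (Fin n → ℝ)) := by
  classical
  obtain ⟨w, hw0, hw1, hwx⟩ := Finset.mem_convexHull'.1 hx
  have hlx : l x = ∑ u ∈ s, w u * l u := by
    rw [← hwx, map_sum]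
    simp
  have hsum : ∑ u ∈ s, w u * (c - l u) = 0 := by
    have h2 : ∑ u ∈ s, w u * c = c := by rw [← Finset.sum_mul, hw1, one_mul]
    have : ∑ u ∈ s, w u * (c - l u) = (∑ u ∈ s, w u * c) - ∑ u ∈ s, w u * l u := by
      rw [← Finset.sum_sub_distrib]
      congr 1; ext u; ring
    rw [this, h2, ← hlx, hxc, sub_self]
  have hzero : ∀ u ∈ s, w u ≠ 0 → l u = c := by
    intro u hu hne
    have h := (Finset.sum_eq_zero_iff_of_nonneg
      (fun u hu => mul_nonneg (hw0 u hu) (by linarith [hle u hu]))).1 hsum u hu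
    rcases mul_eq_zero.1 h with h | h
    · exact absurd h hne
    · linarith [hle u hu]
  refine Finset.mem_convexHull'.2 ⟨w, fun y hy => hw0 y (Finset.mem_of_mem_filter y hy), ?_, ?_⟩
  · rw [Finset.sum_filter_of_ne hzero, hw1]
  · rw [Finset.sum_filter_of_ne (fun u hu h => hzero u hu (fun h0 => h (by simp [h0])))]
    exact hwx

private lemma not_mem_affineSpan_of_ne' {n : ℕ} {F : Set (Fin n → ℝ)}
    {l : (Fin n → ℝ) →L[ℝ] ℝ} {c : ℝ} (hF : ∀ x ∈ F, l x = c) {v : Fin n → ℝ}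
    (hv : l v ≠ c) : v ∉ affineSpan ℝ F := by
  intro hmem
  apply hv
  have hle : affineSpan ℝ F ≤ AffineSubspace.comap ((l : (Fin n → ℝ) →ₗ[ℝ] ℝ).toAffineMap)
      (AffineSubspace.mk' c (⊥ : Submodule ℝ ℝ)) := by
    apply (affineSpan_le).2
    intro x hx
    show x ∈ AffineSubspace.comap _ _
    rw [AffineSubspace.mem_comap, AffineSubspace.mem_mk']
    simp [hF x hx]
  have h2 : v ∈ AffineSubspace.comap ((l : (Fin n → ℝ) →ₗ[ℝ] ℝ).toAffineMap)
      (AffineSubspace.mk' c (⊥ : Submodule ℝ ℝ)) := hle hmem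
  rw [AffineSubspace.mem_comap, AffineSubspace.mem_mk'] at h2
  simpa [sub_eq_zero] using h2

private lemma finrank_face_le' {n : ℕ} {F : Set (Fin n → ℝ)}
    {l : (Fin n → ℝ) →L[ℝ] ℝ} {c : ℝ} (hF : ∀ x ∈ F, l x = c)
    (hl : (l : (Fin n → ℝ) →ₗ[ℝ] ℝ) ≠ 0) :
    Module.finrank ℝ (vectorSpan ℝ F) + 1 ≤ n := by
  have hker : vectorSpan ℝ F ≤ LinearMap.ker (l : (Fin n → ℝ) →ₗ[ℝ] ℝ) := by
    rw [vectorSpan_def, Submodule.span_le]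
    rintro z hz
    rw [Set.mem_vsub] at hz
    obtain ⟨a, ha, b, hb, rfl⟩ := hz
    simp [LinearMap.mem_ker, vsub_eq_sub, hF a ha, hF b hb]
  have h1 : Module.finrank ℝ (LinearMap.ker (l : (Fin n → ℝ) →ₗ[ℝ] ℝ)) + 1 = n := by
    rw [Module.Dual.finrank_ker_add_one_of_ne_zero hl, Module.finrank_fin_fun]
  have := Submodule.finrank_mono hker
  omega

set_option maxHeartbeats 1000000 in
private lemma grow_face' {n : ℕ} {s : Finset (Fin n → ℝ)} {P : Set (Fin n → ℝ)}
    (hP : P = convexHull ℝ (s : Set (Fin n → ℝ)))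
    (hs : affineSpan ℝ (s : Set (Fin n → ℝ)) = ⊤)
    {v : Fin n → ℝ} {l : (Fin n → ℝ) →L[ℝ] ℝ} {c : ℝ}
    (hle : ∀ u ∈ s, l u ≤ c) (hatt : ∃ u ∈ s, l u = c) (hv : l v < c)
    (hdim : Module.finrank ℝ (vectorSpan ℝ {x ∈ P | l x = c}) + 2 ≤ n) :
    ∃ (l' : (Fin n → ℝ) →L[ℝ] ℝ) (c' : ℝ),
      (∀ u ∈ s, l' u ≤ c') ∧ (∃ u ∈ s, l' u = c') ∧ l' v < c' ∧
      Module.finrank ℝ (vectorSpan ℝ {x ∈ P | l x = c}) <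
        Module.finrank ℝ (vectorSpan ℝ {x ∈ P | l' x = c'}) := by
  classical
  set F : Set (Fin n → ℝ) := {x ∈ P | l x = c} with hFdef
  set sF : Finset (Fin n → ℝ) := s.filter (fun u => l u = c) with hsFdef
  obtain ⟨u₀, hu₀s, hu₀c⟩ := hatt
  have hu₀sF : u₀ ∈ sF := Finset.mem_filter.2 ⟨hu₀s, hu₀c⟩
  have hsFsub : ∀ u ∈ sF, u ∈ F := by
    intro u hu
    rcases Finset.mem_filter.1 hu with ⟨hus, huc⟩
    exact ⟨hP ▸ subset_convexHull ℝ _ hus, huc⟩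
  have hFconv : F = convexHull ℝ (sF : Set (Fin n → ℝ)) := by
    apply Set.Subset.antisymm
    · rintro x ⟨hxP, hxc⟩
      exact mem_convexHull_filter' s l c hle (hP ▸ hxP) hxc
    · apply convexHull_min
      · intro u hu; exact hsFsub u hu
      · exact Convex.inter (hP ▸ convex_convexHull ℝ _)
          (convex_hyperplane (l : (Fin n → ℝ) →ₗ[ℝ] ℝ).isLinear c)
  have hvsF : vectorSpan ℝ F = vectorSpan ℝ (sF : Set (Fin n → ℝ)) := by
    rw [hFconv, ← direction_affineSpan, affineSpan_convexHull, direction_affineSpan]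
  -- the affine span of sF together with v
  set A : AffineSubspace ℝ (Fin n → ℝ) :=
    affineSpan ℝ (insert v (sF : Set (Fin n → ℝ))) with hAdef
  have hvA : v ∈ A := subset_affineSpan ℝ _ (Set.mem_insert _ _)
  have hAdir : A.direction ≤ vectorSpan ℝ (sF : Set (Fin n → ℝ)) ⊔
      Submodule.span ℝ {v - u₀} := by
    rw [hAdef, direction_affineSpan, vectorSpan_def, Submodule.span_le]
    rintro z hz
    rw [Set.mem_vsub] at hz
    obtain ⟨a, ha, b, hb, rfl⟩ := hz
    have key : ∀ y, y ∈ insert v (sF : Set (Fin n → ℝ)) →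
        y - u₀ ∈ vectorSpan ℝ (sF : Set (Fin n → ℝ)) ⊔ Submodule.span ℝ {v - u₀} := by
      rintro y (rfl | hy)
      · exact Submodule.mem_sup_right (Submodule.mem_span_singleton_self _)
      · exact Submodule.mem_sup_left (vsub_mem_vectorSpan ℝ hy hu₀sF)
    have : a -ᵥ b = (a - u₀) - (b - u₀) := by rw [vsub_eq_sub]; ring
    rw [this]
    exact Submodule.sub_mem _ (key a ha) (key b hb)
  have hArank : Module.finrank ℝ A.direction < n := by
    have h1 := Submodule.finrank_mono hAdir
    have h2 := Submodule.finrank_add_le_finrank_add_finrank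
      (vectorSpan ℝ (sF : Set (Fin n → ℝ))) (Submodule.span ℝ {v - u₀})
    have h3 : Module.finrank ℝ (Submodule.span ℝ ({v - u₀} : Set (Fin n → ℝ))) ≤ 1 := by
      by_cases hz : v - u₀ = 0
      · rw [show Submodule.span ℝ ({v - u₀} : Set (Fin n → ℝ)) = ⊥ from
          Submodule.span_singleton_eq_bot.2 hz, finrank_bot]
        omega
      · rw [finrank_span_singleton hz]
    have h4 : Module.finrank ℝ (vectorSpan ℝ (sF : Set (Fin n → ℝ))) =
        Module.finrank ℝ (vectorSpan ℝ F) := by rw [hvsF]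
    omega
  -- find a point of s outside A
  have hAne : ∃ w ∈ s, w ∉ A := by
    by_contra h
    push_neg at h
    have : affineSpan ℝ (s : Set (Fin n → ℝ)) ≤ A := affineSpan_le.2 h
    rw [hs, top_le_iff] at this
    rw [this, AffineSubspace.direction_top, finrank_top, Module.finrank_fin_fun] at hArank
    omega
  obtain ⟨w, hws, hwA⟩ := hAne
  have hwv : w - v ∉ A.direction := by
    intro hmem
    exact hwA ((AffineSubspace.vsub_right_mem_direction_iff_mem hvA w).1 (by simpa [vsub_eq_sub] using hmem))
  obtain ⟨φ, hφ0, hφw⟩ := exists_dual_functional' A.direction hwv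
  set c0 : ℝ := φ v with hc0
  have hφA : ∀ x ∈ A, φ x = c0 := by
    intro x hx
    have hmem : x - v ∈ A.direction := by
      simpa [vsub_eq_sub] using (AffineSubspace.vsub_right_mem_direction_iff_mem hvA x).2 hx
    have := hφ0 _ hmem
    rw [map_sub] at this
    linarith [this]
  have hφsF : ∀ u ∈ sF, φ u = c0 := fun u hu =>
    hφA u (subset_affineSpan ℝ _ (Set.mem_insert_of_mem _ hu))
  have hφwc : φ w = c0 + 1 := by
    have : φ w - φ v = 1 := by rw [← map_sub]; exact hφw
    linarith
  set T : Finset (Fin n → ℝ) := s.filter (fun u => c0 < φ u) with hTdef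
  have hwT : w ∈ T := Finset.mem_filter.2 ⟨hws, by rw [hφwc]; linarith⟩
  have hTne : T.Nonempty := ⟨w, hwT⟩
  have hTlt : ∀ u ∈ T, l u < c ∧ c0 < φ u := by
    intro u hu
    rcases Finset.mem_filter.1 hu with ⟨hus, huφ⟩
    refine ⟨lt_of_le_of_ne (hle u hus) fun hc => ?_, huφ⟩
    exact absurd (hφsF u (Finset.mem_filter.2 ⟨hus, hc⟩)) (by linarith)
  set t0 : ℝ := T.inf' hTne (fun u => (c - l u) / (φ u - c0)) with ht0
  obtain ⟨ustar, hustarT, hustar⟩ := Finset.exists_mem_eq_inf' hTne (fun u => (c - l u) / (φ u - c0))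
  have hustars : ustar ∈ s := (Finset.mem_filter.1 hustarT).1
  have ht0pos : 0 < t0 := by
    rw [ht0, hustar]
    have := hTlt ustar hustarT
    exact div_pos (by linarith [this.1]) (by linarith [this.2])
  have ht0le : ∀ u ∈ T, t0 * (φ u - c0) ≤ c - l u := by
    intro u hu
    have h1 : t0 ≤ (c - l u) / (φ u - c0) := Finset.inf'_le _ hu
    have h2 := (hTlt u hu).2
    calc t0 * (φ u - c0) ≤ ((c - l u) / (φ u - c0)) * (φ u - c0) := by
          apply mul_le_mul_of_nonneg_right h1 (by linarith)
      _ = c - l u := div_mul_cancel₀ _ (by linarith)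
  refine ⟨l + t0 • φ, c + t0 * c0, ?_, ⟨u₀, hu₀s, ?_⟩, ?_, ?_⟩
  · intro u hus
    simp only [ContinuousLinearMap.add_apply, ContinuousLinearMap.coe_smul', Pi.smul_apply,
      smul_eq_mul]
    by_cases huc : l u = c
    · have := hφsF u (Finset.mem_filter.2 ⟨hus, huc⟩)
      rw [huc, this]
    · have hlu : l u < c := lt_of_le_of_ne (hle u hus) huc
      rcases le_or_gt (φ u) c0 with hφu | hφu
      · nlinarith
      · have := ht0le u (Finset.mem_filter.2 ⟨hus, hφu⟩)
        nlinarith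
  · simp only [ContinuousLinearMap.add_apply, ContinuousLinearMap.coe_smul', Pi.smul_apply,
      smul_eq_mul]
    rw [hu₀c, hφsF u₀ hu₀sF]
  · simp only [ContinuousLinearMap.add_apply, ContinuousLinearMap.coe_smul', Pi.smul_apply,
      smul_eq_mul, ← hc0]
    linarith
  · -- rank increases
    set l' : (Fin n → ℝ) →L[ℝ] ℝ := l + t0 • φ with hl'
    set c' : ℝ := c + t0 * c0 with hc'
    set F' : Set (Fin n → ℝ) := {x ∈ P | l' x = c'} with hF'
    have hl'app : ∀ x, l' x = l x + t0 * φ x := by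
      intro x
      simp [hl', ContinuousLinearMap.add_apply]
    have hFF' : F ⊆ F' := by
      intro x hx
      have hxsF : x ∈ convexHull ℝ (sF : Set (Fin n → ℝ)) := hFconv ▸ hx
      refine ⟨hx.1, ?_⟩
      have hhyp : convexHull ℝ (sF : Set (Fin n → ℝ)) ⊆ {y | l' y = c'} := by
        apply convexHull_min
        · intro u hu
          have h1 : l u = c := (Finset.mem_filter.1 hu).2
          have h2 := hφsF u hu
          simp only [Set.mem_setOf_eq, hl'app]
          rw [h1, h2]
        · exact convex_hyperplane (l' : (Fin n → ℝ) →ₗ[ℝ] ℝ).isLinear c'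
      exact hhyp hxsF
    have hustarF' : ustar ∈ F' := by
      refine ⟨hP ▸ subset_convexHull ℝ _ hustars, ?_⟩
      have h2 := (hTlt ustar hustarT).2
      have : t0 * (φ ustar - c0) = c - l ustar := by
        rw [ht0, hustar]
        exact div_mul_cancel₀ _ (by linarith)
      rw [hl'app]
      linarith [this]
    have hustarnot : ustar ∉ affineSpan ℝ F := by
      intro hmem
      have hFA : F ⊆ (A : Set (Fin n → ℝ)) := by
        rw [hFconv]
        apply convexHull_min
        · intro u hu
          exact subset_affineSpan ℝ _ (Set.mem_insert_of_mem _ hu)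
        · exact AffineSubspace.convex A
      have : affineSpan ℝ F ≤ A := affineSpan_le.2 hFA
      have hφustar := hφA ustar (this hmem)
      have := (hTlt ustar hustarT).2
      linarith
    have hlt : affineSpan ℝ F < affineSpan ℝ F' := by
      refine lt_of_le_of_ne (affineSpan_mono ℝ hFF') fun h => ?_
      exact hustarnot (h ▸ subset_affineSpan ℝ F' hustarF')
    have hFne : (F : Set (Fin n → ℝ)).Nonempty := ⟨u₀, hsFsub u₀ hu₀sF⟩
    have hFspan_ne : ((affineSpan ℝ F : Set (Fin n → ℝ))).Nonempty :=
      hFne.mono (subset_affineSpan ℝ F)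
    have hdirlt := AffineSubspace.direction_lt_of_nonempty hlt hFspan_ne
    rw [direction_affineSpan, direction_affineSpan] at hdirlt
    exact Submodule.finrank_lt_finrank_of_lt hdirlt

private lemma face_rank_le' {n : ℕ} {s : Finset (Fin n → ℝ)} {P : Set (Fin n → ℝ)}
    (hP : P = convexHull ℝ (s : Set (Fin n → ℝ)))
    {v : Fin n → ℝ} {l : (Fin n → ℝ) →L[ℝ] ℝ} {c : ℝ}
    (hatt : ∃ u ∈ s, l u = c) (hv : l v < c) :
    Module.finrank ℝ (vectorSpan ℝ {x ∈ P | l x = c}) + 1 ≤ n := by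
  obtain ⟨u₀, hu₀s, hu₀c⟩ := hatt
  apply finrank_face_le' (fun x hx => hx.2)
  intro h0
  have h1 : l u₀ = 0 := by
    have : (l : (Fin n → ℝ) →ₗ[ℝ] ℝ) u₀ = 0 := by rw [h0]; rfl
    simpa using this
  have h2 : l v = 0 := by
    have : (l : (Fin n → ℝ) →ₗ[ℝ] ℝ) v = 0 := by rw [h0]; rfl
    simpa using this
  rw [h1] at hu₀c
  rw [h2] at hv
  linarith

private lemma exists_facet_rec' {n : ℕ} (hn : 1 ≤ n) {s : Finset (Fin n → ℝ)}
    {P : Set (Fin n → ℝ)}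
    (hP : P = convexHull ℝ (s : Set (Fin n → ℝ)))
    (hs : affineSpan ℝ (s : Set (Fin n → ℝ)) = ⊤) {v : Fin n → ℝ} :
    ∀ (k : ℕ) (l : (Fin n → ℝ) →L[ℝ] ℝ) (c : ℝ), (∀ u ∈ s, l u ≤ c) →
      (∃ u ∈ s, l u = c) → l v < c →
      n - 1 - Module.finrank ℝ (vectorSpan ℝ {x ∈ P | l x = c}) ≤ k →
      ∃ (l' : (Fin n → ℝ) →L[ℝ] ℝ) (c' : ℝ),
        (∀ u ∈ s, l' u ≤ c') ∧ (∃ u ∈ s, l' u = c') ∧ l' v < c' ∧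
        Module.finrank ℝ (vectorSpan ℝ {x ∈ P | l' x = c'}) = n - 1 := by
  intro k
  induction k with
  | zero =>
    intro l c hle hatt hv hk
    have h1 := face_rank_le' hP hatt hv
    exact ⟨l, c, hle, hatt, hv, by omega⟩
  | succ k ih =>
    intro l c hle hatt hv hk
    by_cases heq : Module.finrank ℝ (vectorSpan ℝ {x ∈ P | l x = c}) = n - 1
    · exact ⟨l, c, hle, hatt, hv, heq⟩
    · have h1 := face_rank_le' hP hatt hv
      have hdim : Module.finrank ℝ (vectorSpan ℝ {x ∈ P | l x = c}) + 2 ≤ n := by omega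
      obtain ⟨l', c', hle', hatt', hv', hlt⟩ := grow_face' hP hs hle hatt hv hdim
      have h2 := face_rank_le' hP hatt' hv'
      exact ih l' c' hle' hatt' hv' (by omega)

/-- A full-dimensional polytope in `ℝⁿ` that is a pyramid over each of its facets
(for every facet `F`, exactly one vertex of `P` lies outside `F`) is a simplex. -/
theorem pyramid_over_every_facet_is_simplex (n : ℕ) (hn : 1 ≤ n)
    (s : Finset (Fin n → ℝ)) (P : Set (Fin n → ℝ))
    (hP : P = convexHull ℝ (s : Set (Fin n → ℝ)))
    (hint : (interior P).Nonempty)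
    (hpyr : ∀ F : Set (Fin n → ℝ), IsExposed ℝ P F → F ≠ P →
      Module.finrank ℝ (vectorSpan ℝ F) = n - 1 →
      ∃ p, Set.extremePoints ℝ P \ F = {p}) :
    ∃ t : Finset (Fin n → ℝ), t.card = n + 1 ∧
      AffineIndependent ℝ (fun p : {x // x ∈ t} => (p : Fin n → ℝ)) ∧
      P = convexHull ℝ (t : Set (Fin n → ℝ)) := by
  classical
  set E : Set (Fin n → ℝ) := Set.extremePoints ℝ P with hE
  have hPconv : Convex ℝ P := hP ▸ convex_convexHull ℝ _
  have hPcomp : IsCompact P := hP ▸ (s.finite_toSet.isCompact_convexHull ℝ)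
  have hEs : E ⊆ (s : Set (Fin n → ℝ)) := by
    rw [hE, hP]
    exact extremePoints_convexHull_subset
  have hEfin : E.Finite := s.finite_toSet.subset hEs
  have hconvE : convexHull ℝ E = P := by
    have h1 := closure_convexHull_extremePoints hPcomp hPconv
    have h2 : IsClosed (convexHull ℝ E) := (hEfin.isCompact_convexHull ℝ).isClosed
    rw [← hE] at h1
    rw [← h1, h2.closure_eq]
  have hs : affineSpan ℝ (s : Set (Fin n → ℝ)) = ⊤ := by
    apply affineSpan_eq_top_of_nonempty_interior
    rwa [← hP]
  -- key step: every extreme point is outside the affine span of the other extreme points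
  have hkey : ∀ v ∈ E, v ∉ affineSpan ℝ (E \ {v}) := by
    intro v hvE
    have hvs : v ∈ s := hEs hvE
    have hvP : v ∈ P := hP ▸ subset_convexHull ℝ _ hvs
    -- v is not in the hull of the other points of s
    have hvnot : v ∉ convexHull ℝ ((s.erase v : Finset (Fin n → ℝ)) : Set (Fin n → ℝ)) := by
      intro hmem
      have hsub : (s : Set (Fin n → ℝ)) ⊆
          convexHull ℝ ((s.erase v : Finset (Fin n → ℝ)) : Set (Fin n → ℝ)) := by
        intro u hu
        by_cases huv : u = v
        · rwa [huv]
        · exact subset_convexHull ℝ _ (by simp [Finset.mem_erase, huv, hu])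
      have hPP : P = convexHull ℝ ((s.erase v : Finset (Fin n → ℝ)) : Set (Fin n → ℝ)) := by
        apply Set.Subset.antisymm
        · rw [hP]
          exact convexHull_min hsub (convex_convexHull ℝ _)
        · rw [hP]
          exact convexHull_mono (by intro x hx; exact Finset.mem_of_mem_erase (by exact_mod_cast hx))
      have : E ⊆ ((s.erase v : Finset (Fin n → ℝ)) : Set (Fin n → ℝ)) := by
        rw [hE, hPP]
        exact extremePoints_convexHull_subset
      have := this hvE
      simp at this
    -- the erased set is nonempty
    have hEne : (s.erase v).Nonempty := by
      rcases Finset.eq_empty_or_nonempty (s.erase v) with h | h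
      · exfalso
        have hss : (s : Set (Fin n → ℝ)) = {v} := by
          apply Set.Subset.antisymm
          · intro u hu
            by_contra huv
            have : u ∈ s.erase v := Finset.mem_erase.2 ⟨huv, hu⟩
            rw [h] at this
            simp at this
          · simp [hvs]
        rw [hss] at hs
        have h2 : vectorSpan ℝ ({v} : Set (Fin n → ℝ)) = ⊤ := by
          rw [← direction_affineSpan, hs, AffineSubspace.direction_top]
        rw [vectorSpan_singleton] at h2
        have h3 : Module.finrank ℝ (⊥ : Submodule ℝ (Fin n → ℝ)) = n := by
          rw [h2, finrank_top, Module.finrank_fin_fun]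
        rw [finrank_bot] at h3
        omega
      · exact h
    -- separate v from the hull of the other points
    obtain ⟨f, u, hfv, hf⟩ := geometric_hahn_banach_point_closed
      (convex_convexHull ℝ _) ((s.erase v).finite_toSet.isCompact_convexHull ℝ).isClosed hvnot
    obtain ⟨u₀, hu₀s, hu₀max⟩ := s.exists_max_image f ⟨v, hvs⟩
    set c : ℝ := f u₀ with hc
    have hle : ∀ y ∈ s, f y ≤ c := hu₀max
    have hfvc : f v < c := by
      obtain ⟨b, hb⟩ := hEne
      have hbmem : (b : Fin n → ℝ) ∈ convexHull ℝ
          ((s.erase v : Finset (Fin n → ℝ)) : Set (Fin n → ℝ)) := subset_convexHull ℝ _ (by exact_mod_cast hb)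
      have h1 := hf b hbmem
      have h2 : f b ≤ c := hle b (Finset.mem_of_mem_erase hb)
      linarith
    -- get the facet
    obtain ⟨l, c', hle', hatt', hv', hrank⟩ := exists_facet_rec' hn hP hs
      (n - 1) f c hle ⟨u₀, hu₀s, rfl⟩ hfvc (by omega)
    set F : Set (Fin n → ℝ) := {x ∈ P | l x = c'} with hF
    have hPle : ∀ y ∈ P, l y ≤ c' := by
      intro y hy
      rw [hP] at hy
      have : convexHull ℝ (s : Set (Fin n → ℝ)) ⊆ {z | l z ≤ c'} :=
        convexHull_min (fun u hu => hle' u hu) (convex_halfSpace_le (l : (Fin n → ℝ) →ₗ[ℝ] ℝ).isLinear c')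
      exact this hy
    obtain ⟨w₀, hw₀s, hw₀c⟩ := hatt'
    have hw₀P : w₀ ∈ P := hP ▸ subset_convexHull ℝ _ hw₀s
    have hFeq : F = {x ∈ P | ∀ y ∈ P, l y ≤ l x} := by
      ext x
      constructor
      · rintro ⟨hxP, hxc⟩
        exact ⟨hxP, fun y hy => hxc ▸ hPle y hy⟩
      · rintro ⟨hxP, hxmax⟩
        refine ⟨hxP, le_antisymm (hPle x hxP) ?_⟩
        have := hxmax w₀ hw₀P
        rw [hw₀c] at this
        exact this
    have hexp : IsExposed ℝ P F := fun _ => ⟨l, hFeq⟩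
    have hvF : v ∉ F := fun h => absurd h.2 (ne_of_lt hv')
    have hFP : F ≠ P := fun h => hvF (h ▸ hvP)
    obtain ⟨p, hp⟩ := hpyr F hexp hFP hrank
    have hvp : v = p := by
      have : v ∈ Set.extremePoints ℝ P \ F := ⟨hvE, hvF⟩
      rw [hp] at this
      exact this
    have hsubF : E \ {v} ⊆ F := by
      intro e he
      by_contra heF
      have : e ∈ Set.extremePoints ℝ P \ F := ⟨he.1, heF⟩
      rw [hp, ← hvp] at this
      exact he.2 this
    have h1 : affineSpan ℝ (E \ {v}) ≤ affineSpan ℝ F := affineSpan_mono ℝ hsubF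
    intro hmem
    exact not_mem_affineSpan_of_ne' (fun x hx => hx.2) (ne_of_lt hv') (h1 hmem)
  -- now conclude
  set t : Finset (Fin n → ℝ) := s.filter (fun x => x ∈ E) with ht
  have hts : (t : Set (Fin n → ℝ)) = E := by
    rw [ht, Finset.coe_filter]
    ext x
    simp only [Set.mem_setOf_eq, Finset.mem_coe]
    exact ⟨fun h => h.2, fun h => ⟨hEs h, h⟩⟩
  have hconvt : P = convexHull ℝ (t : Set (Fin n → ℝ)) := by rw [hts, hconvE]
  have hai : AffineIndependent ℝ (fun p : {x // x ∈ t} => (p : Fin n → ℝ)) := by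
    by_contra hnot
    obtain ⟨g, hrel, hsum, x, hxt, hgx⟩ :=
      exists_nontrivial_relation_sum_zero_of_not_affine_ind hnot
    have hxE : x ∈ E := by rw [← hts]; exact_mod_cast hxt
    apply hkey x hxE
    have hErase : ((t.erase x : Finset (Fin n → ℝ)) : Set (Fin n → ℝ)) = E \ {x} := by
      rw [Finset.coe_erase, hts]
    have hgx : g x ≠ 0 := hgx
    have hsum_erase : ∑ u ∈ t.erase x, g u = - g x := by
      rw [Finset.sum_erase_eq_sub hxt, hsum]; ring
    have hrel_erase : ∑ u ∈ t.erase x, g u • u = -(g x • x) := by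
      rw [Finset.sum_erase_eq_sub hxt, hrel]; simp
    set w : (Fin n → ℝ) → ℝ := fun u => -g u / g x with hw
    have hw1 : ∑ u ∈ t.erase x, w u = 1 := by
      rw [hw]
      simp only []
      rw [← Finset.sum_div]
      rw [show ∑ u ∈ t.erase x, -g u = g x by rw [Finset.sum_neg_distrib, hsum_erase]; ring]
      exact div_self hgx
    have hcomb : ∑ u ∈ t.erase x, w u • u = x := by
      have h1 : ∀ u : Fin n → ℝ, w u • u = (-(g x)⁻¹) • (g u • u) := by
        intro u
        rw [hw, smul_smul]
        congr 1
        show -g u / g x = -(g x)⁻¹ * g u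
        rw [div_eq_mul_inv]
        ring
      rw [Finset.sum_congr rfl (fun u _ => h1 u), ← Finset.smul_sum, hrel_erase]
      rw [smul_neg, neg_smul, neg_neg, smul_smul, inv_mul_cancel₀ hgx, one_smul]
    have hW1 : ∑ i : {u // u ∈ t.erase x}, w (i : Fin n → ℝ) = 1 := by
      rw [Finset.sum_coe_sort (t.erase x) w]
      exact hw1
    have h2 : (Finset.univ.affineCombination ℝ
        (fun i : {u // u ∈ t.erase x} => (i : Fin n → ℝ)) (fun i => w (i : Fin n → ℝ))) = x := by
      rw [Finset.affineCombination_eq_linear_combination _ _ _ hW1]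
      rw [show ∑ i : {u // u ∈ t.erase x}, w (i : Fin n → ℝ) • (i : Fin n → ℝ)
        = ∑ u ∈ t.erase x, w u • u from Finset.sum_coe_sort (t.erase x) (fun u => w u • u)]
      exact hcomb
    have h3 := affineCombination_mem_affineSpan hW1
      (fun i : {u // u ∈ t.erase x} => (i : Fin n → ℝ))
    rw [h2, Subtype.range_coe_subtype] at h3
    have h4 : {u : Fin n → ℝ | u ∈ t.erase x} = E \ {x} := by
      rw [← hErase]
      ext z
      simp [and_comm]
    rwa [h4] at h3
  -- cardinality
  have hEne : E.Nonempty := by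
    rcases hint with ⟨y, hy⟩
    have hyP : y ∈ P := interior_subset hy
    rw [← hconvE] at hyP
    rcases Set.eq_empty_or_nonempty E with h | h
    · rw [h] at hyP
      simp [convexHull_empty] at hyP
    · exact h
  have htne : t.Nonempty := by
    obtain ⟨e, he⟩ := hEne
    exact ⟨e, by rw [← Finset.mem_coe, hts]; exact he⟩
  have hspan_top : affineSpan ℝ ((t : Set (Fin n → ℝ))) = ⊤ := by
    rw [hts, ← affineSpan_convexHull, hconvE, hP, affineSpan_convexHull, hs]
  have hfin : Module.finrank ℝ (vectorSpan ℝ (t : Set (Fin n → ℝ))) = n := by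
    rw [← direction_affineSpan, hspan_top, AffineSubspace.direction_top, finrank_top,
      Module.finrank_fin_fun]
  have hcard1 : 1 ≤ t.card := Finset.card_pos.2 htne
  have hfc : Fintype.card {x // x ∈ t} = (t.card - 1) + 1 := by
    rw [Fintype.card_coe]
    omega
  have h4 := hai.finrank_vectorSpan hfc
  rw [Subtype.range_coe_subtype] at h4
  rw [show {x : Fin n → ℝ | x ∈ t} = (t : Set (Fin n → ℝ)) from rfl, hfin] at h4
  exact ⟨t, by omega, hai, hconvt⟩
end

section
/- Let P ⊂ R^n be a centrally symmetric polytope (P = -P) with nonempty interior that is a bipyramid under each of its vertices, i.e., for every vertex v of P there is a hyperplane H_v with v ∉ H_v such that P = conv((P ∩ H_v) ∪ {v, -v}). Then P is a cross-polytope, i.e., P is the convex hull of n pairs ±w_1,...,±w_n of linearly independent vectors. -/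
open Pointwise

/-- From a finite set closed under negation and without fixed points of negation,
one can extract a transversal of the `±` pairs. -/
lemma exists_transversal_of_neg_closed {V : Type*} [AddCommGroup V] [DecidableEq V]
    (E : Finset V) (hsymm : ∀ v ∈ E, -v ∈ E) (hne : ∀ v ∈ E, v ≠ -v) :
    ∃ W : Finset V, W ⊆ E ∧ (∀ x ∈ E, x ∈ W ∨ -x ∈ W) ∧ ∀ v ∈ W, -v ∉ W := by
  induction E using Finset.strongInduction with
  | _ E ih =>
    rcases E.eq_empty_or_nonempty with rfl | ⟨v, hv⟩
    · exact ⟨∅, by simp, by simp, by simp⟩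
    · set E' : Finset V := E \ {v, -v} with hE'
      have hmemE' : ∀ x, x ∈ E' ↔ x ∈ E ∧ x ≠ v ∧ x ≠ -v := by
        intro x; simp [hE', and_assoc]
      have hss : E' ⊂ E := by
        refine Finset.ssubset_iff_of_subset (Finset.sdiff_subset) |>.2 ⟨v, hv, ?_⟩
        simp [hmemE']
      have hsymm' : ∀ u ∈ E', -u ∈ E' := by
        intro u hu
        rw [hmemE'] at hu ⊢
        refine ⟨hsymm u hu.1, ?_, ?_⟩
        · intro h; exact hu.2.2 (by rw [← h, neg_neg])
        · intro h; exact hu.2.1 (neg_injective h)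
      have hne' : ∀ u ∈ E', u ≠ -u := fun u hu => hne u ((hmemE' u).1 hu).1
      obtain ⟨W, hWsub, hWcov, hWdisj⟩ := ih E' hss hsymm' hne'
      refine ⟨insert v W, ?_, ?_, ?_⟩
      · intro x hx
        rcases Finset.mem_insert.1 hx with rfl | hx
        · exact hv
        · exact ((hmemE' x).1 (hWsub hx)).1
      · intro x hx
        by_cases h1 : x = v
        · left; rw [h1]; exact Finset.mem_insert_self _ _
        by_cases h2 : x = -v
        · right; rw [h2, neg_neg]; exact Finset.mem_insert_self _ _
        · rcases hWcov x ((hmemE' x).2 ⟨hx, h1, h2⟩) with h | h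
          · exact Or.inl (Finset.mem_insert_of_mem h)
          · exact Or.inr (Finset.mem_insert_of_mem h)
      · intro u hu hnu
        rcases Finset.mem_insert.1 hu with rfl | hu
        · rcases Finset.mem_insert.1 hnu with h | h
          · exact hne u hv h.symm
          · exact ((hmemE' _).1 (hWsub h)).2.2 rfl
        · rcases Finset.mem_insert.1 hnu with h | h
          · exact ((hmemE' u).1 (hWsub hu)).2.2 (by rw [← h, neg_neg])
          · exact hWdisj u hu h

/-- A full-dimensional centrally symmetric polytope in `ℝⁿ` that is a bipyramid under
each of its vertices is a cross-polytope. -/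
theorem bipyramid_under_every_vertex_is_crosspolytope (n : ℕ) (hn : 1 ≤ n)
    (s : Finset (Fin n → ℝ)) (P : Set (Fin n → ℝ))
    (hP : P = convexHull ℝ (s : Set (Fin n → ℝ)))
    (hint : (interior P).Nonempty)
    (hsym : P = -P)
    (hbip : ∀ v ∈ Set.extremePoints ℝ P, ∃ (f : (Fin n → ℝ) →ₗ[ℝ] ℝ) (c : ℝ),
      f ≠ 0 ∧ f v ≠ c ∧ P = convexHull ℝ ((P ∩ {x | f x = c}) ∪ {v, -v})) :
    ∃ w : Fin n → (Fin n → ℝ), LinearIndependent ℝ w ∧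
      P = convexHull ℝ (Set.range w ∪ -(Set.range w)) := by
  classical
  set E : Set (Fin n → ℝ) := Set.extremePoints ℝ P with hEdef
  have hPconv : Convex ℝ P := hP ▸ convex_convexHull ℝ _
  have hPcomp : IsCompact P := hP ▸ s.finite_toSet.isCompact_convexHull (𝕜 := ℝ)
  have hEs : E ⊆ ↑s := by
    rw [hEdef, hP]; exact extremePoints_convexHull_subset
  have hEfin : E.Finite := s.finite_toSet.subset hEs
  -- P is the convex hull of its extreme points
  have hPE : P = convexHull ℝ E := by
    have h1 := closure_convexHull_extremePoints hPcomp hPconv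
    rw [← h1, (hEfin.isClosed_convexHull (𝕜 := ℝ)).closure_eq]
  -- E is symmetric
  have hEsymm : ∀ v ∈ E, -v ∈ E := by
    intro v hv
    have himg := image_extremePoints (LinearEquiv.neg ℝ (M := Fin n → ℝ)) P
    have hPneg : (⇑(LinearEquiv.neg ℝ (M := Fin n → ℝ))) '' P = P := by
      rw [show (⇑(LinearEquiv.neg ℝ (M := Fin n → ℝ))) = (fun x => -x) from rfl]
      rw [Set.image_neg_eq_neg, ← hsym]
    rw [hPneg] at himg
    rw [hEdef, ← himg]
    exact ⟨v, hv, rfl⟩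
  -- 0 is in the interior of P
  have h0int : (0 : Fin n → ℝ) ∈ interior P := by
    obtain ⟨x0, hx0⟩ := hint
    have hintconv : Convex ℝ (interior P) := hPconv.interior
    have hx0' : -x0 ∈ interior P := by
      have h := (Homeomorph.neg (Fin n → ℝ)).image_interior P
      rw [Homeomorph.coe_neg] at h
      simp only [Set.image_neg_eq_neg] at h
      rw [← hsym] at h
      rw [← h]
      exact Set.neg_mem_neg.2 hx0
    have := hintconv hx0 hx0' (by norm_num : (0:ℝ) ≤ 1/2) (by norm_num : (0:ℝ) ≤ 1/2)
      (by norm_num)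
    simpa [smul_neg] using this
  -- 0 is not an extreme point
  have h0notE : (0 : Fin n → ℝ) ∉ E := by
    intro h0E
    obtain ⟨ε, hε, hball⟩ := Metric.mem_nhds_iff.1 (mem_interior_iff_mem_nhds.1 h0int)
    set z : Fin n → ℝ := fun _ => ε / 2 with hz
    have hzne : z ≠ 0 := by
      intro h
      have := congr_fun h ⟨0, hn⟩
      simp [hz] at this
      linarith
    have hzball : z ∈ Metric.ball (0 : Fin n → ℝ) ε := by
      rw [Metric.mem_ball, dist_zero_right]
      have : ‖z‖ = ‖(ε/2 : ℝ)‖ := by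
        haveI : Nonempty (Fin n) := ⟨⟨0, hn⟩⟩
        exact pi_norm_const _
      rw [this, Real.norm_eq_abs, abs_of_pos (by linarith)]
      linarith
    have hzP : z ∈ P := hball hzball
    have hzP' : -z ∈ P := by
      have : -z ∈ Metric.ball (0 : Fin n → ℝ) ε := by
        rw [Metric.mem_ball, dist_zero_right, norm_neg]
        rw [Metric.mem_ball, dist_zero_right] at hzball
        exact hzball
      exact hball this
    have hopen : (0 : Fin n → ℝ) ∈ openSegment ℝ z (-z) :=
      ⟨1/2, 1/2, by norm_num, by norm_num, by norm_num, by
        rw [smul_neg, add_neg_cancel]⟩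
    exact hzne (h0E.2 hzP hzP' hopen)
  -- no extreme point equals its negation
  have hEne : ∀ v ∈ E, v ≠ -v := by
    intro v hv h
    apply h0notE
    have h2 : (2 : ℝ) • v = 0 := by
      rw [two_smul]; nth_rewrite 2 [h]; rw [add_neg_cancel]
    have : v = 0 := by
      rcases smul_eq_zero.1 h2 with h' | h'
      · norm_num at h'
      · exact h'
    rwa [this] at hv
  -- E spans everything
  have hspan : Submodule.span ℝ E = ⊤ := by
    apply Submodule.eq_top_of_nonempty_interior'
    obtain ⟨x0, hx0⟩ := hint
    refine ⟨x0, ?_⟩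
    apply interior_mono _ hx0
    rw [hPE]
    exact convexHull_min Submodule.subset_span (Submodule.span ℝ E).convex
  -- the key separating functionals
  have hkey : ∀ v ∈ E, ∃ g : (Fin n → ℝ) →ₗ[ℝ] ℝ, g v ≠ 0 ∧
      ∀ u ∈ E, u ≠ v → u ≠ -v → g u = 0 := by
    intro v hv
    obtain ⟨f, c, hf0, hfvc, hPf⟩ := hbip v hv
    by_cases hex : ∃ u ∈ E, u ≠ v ∧ u ≠ -v
    · have hEsub : E ⊆ (P ∩ {x | f x = c}) ∪ {v, -v} := by
        have h := extremePoints_convexHull_subset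
          (𝕜 := ℝ) (A := (P ∩ {x | f x = c}) ∪ {v, -v})
        rw [hEdef]
        nth_rewrite 1 [hPf]
        exact h
      have hmem : ∀ u' ∈ E, u' ≠ v → u' ≠ -v → f u' = c := by
        intro u' hu' h1 h2
        rcases hEsub hu' with h | h
        · exact h.2
        · rcases h with h | h
          · exact absurd h h1
          · exact absurd h h2
      have hc0 : c = 0 := by
        obtain ⟨u, hu, huv, hunv⟩ := hex
        have h1 := hmem u hu huv hunv
        have h2 : f (-u) = c := by
          refine hmem (-u) (hEsymm u hu) ?_ ?_
          · intro h; exact hunv (by rw [← h, neg_neg])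
          · intro h; exact huv (neg_injective h)
        rw [map_neg, h1] at h2
        linarith
      refine ⟨f, by rw [hc0] at hfvc; exact hfvc, fun u' hu' h1 h2 => by
        rw [hmem u' hu' h1 h2, hc0]⟩
    · push_neg at hex
      have hv0 : v ≠ 0 := fun h => h0notE (h ▸ hv)
      obtain ⟨i, hi⟩ : ∃ i, v i ≠ 0 := by
        by_contra h; push_neg at h; exact hv0 (funext h)
      exact ⟨LinearMap.proj i, hi, fun u hu h1 h2 => absurd (hex u hu h1) h2⟩
  -- extract a transversal of the ± pairs
  obtain ⟨W, hWE, hWcov, hWdisj⟩ := exists_transversal_of_neg_closed hEfin.toFinset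
    (by intro v hv; rw [Set.Finite.mem_toFinset] at *; exact hEsymm v hv)
    (by intro v hv; rw [Set.Finite.mem_toFinset] at hv; exact hEne v hv)
  have hWsubE : (↑W : Set (Fin n → ℝ)) ⊆ E := by
    intro x hx; exact hEfin.mem_toFinset.1 (hWE hx)
  -- W is linearly independent
  have hli : LinearIndependent ℝ (fun x : (↑W : Set (Fin n → ℝ)) => (x : Fin n → ℝ)) := by
    rw [Fintype.linearIndependent_iff]
    intro g hg j
    obtain ⟨gj, hgj0, hgjz⟩ := hkey j.1 (hWsubE j.2)
    have hsum : ∑ i : (↑W : Set (Fin n → ℝ)), g i * gj i.1 = 0 := by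
      have := congrArg gj hg
      rw [map_sum, map_zero] at this
      simpa [map_smul, smul_eq_mul] using this
    rw [Finset.sum_eq_single j] at hsum
    · rcases mul_eq_zero.1 hsum with h | h
      · exact h
      · exact absurd h hgj0
    · intro i _ hij
      have h1 : i.1 ≠ j.1 := fun h => hij (Subtype.ext h)
      have h2 : i.1 ≠ -j.1 := by
        intro h
        have hjW : j.1 ∈ W := j.2
        have : -j.1 ∉ W := hWdisj j.1 hjW
        exact this (h ▸ i.2)
      rw [hgjz i.1 (hWsubE i.2) h1 h2, mul_zero]
    · intro h; exact absurd (Finset.mem_univ j) h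
  -- W spans everything
  have hWspan : Submodule.span ℝ (↑W : Set (Fin n → ℝ)) = ⊤ := by
    rw [eq_top_iff, ← hspan, Submodule.span_le]
    intro u hu
    rcases hWcov u (hEfin.mem_toFinset.2 hu) with h | h
    · exact Submodule.subset_span h
    · have : -u ∈ Submodule.span ℝ (↑W : Set (Fin n → ℝ)) := Submodule.subset_span h
      simpa using (Submodule.span ℝ (↑W : Set (Fin n → ℝ))).neg_mem this
  -- W is a basis, so it has exactly n elements
  have hb : Module.Basis (↑W : Set (Fin n → ℝ)) ℝ (Fin n → ℝ) := Module.Basis.mk hli (by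
    rw [Subtype.range_coe]; exact hWspan.ge)
  have hcard : Fintype.card (↑W : Set (Fin n → ℝ)) = n := by
    have h1 := Module.finrank_eq_card_basis hb
    rw [Module.finrank_fin_fun] at h1; exact h1.symm
  obtain ⟨e⟩ : Nonempty (Fin n ≃ (↑W : Set (Fin n → ℝ))) :=
    ⟨(Fintype.equivFinOfCardEq hcard).symm⟩
  refine ⟨fun i => (e i : Fin n → ℝ), hli.comp e e.injective, ?_⟩
  have hrange : Set.range (fun i => (e i : Fin n → ℝ)) = (↑W : Set (Fin n → ℝ)) := by
    ext x
    constructor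
    · rintro ⟨i, rfl⟩; exact (e i).2
    · intro hx; exact ⟨e.symm ⟨x, hx⟩, by simp only [Equiv.apply_symm_apply]⟩
  rw [hrange, hPE]
  congr 1
  apply Set.Subset.antisymm
  · intro u hu
    rcases hWcov u (hEfin.mem_toFinset.2 hu) with h | h
    · exact Or.inl h
    · exact Or.inr (by rwa [Set.mem_neg])
  · intro u hu
    rcases hu with h | h
    · exact hWsubE h
    · rw [Set.mem_neg] at h
      have := hEsymm (-u) (hWsubE h)
      rwa [neg_neg] at this
end

section
/- Every zonotope Z ⊂ R^n with nonempty interior and at most n+1 generators is affinely equivalent to C_n + [-y, y] for some y ∈ [0,1]^n, where C_n = sum of [-e_i, e_i]. -/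
open Pointwise

private lemma sum_sets_subset_submodule {α : Type*} [AddCommGroup α] [Module ℝ α]
    {ι : Type*} (s : Finset ι) (S : ι → Set α) (p : Submodule ℝ α)
    (h : ∀ i ∈ s, S i ⊆ (p : Set α)) : (∑ i ∈ s, S i) ⊆ (p : Set α) := by
  classical
  induction s using Finset.induction_on with
  | empty =>
      rw [Finset.sum_empty]
      rw [Set.zero_subset]
      exact p.zero_mem
  | @insert a t hni ih =>
      rw [Finset.sum_insert hni]
      refine Set.add_subset_iff.2 fun x hx y hy => p.add_mem ?_ ?_
      · exact h a (Finset.mem_insert_self a t) hx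
      · exact ih (fun i hi => h i (Finset.mem_insert_of_mem hi)) hy

/-- Every full-dimensional zonotope `Z ⊂ ℝⁿ` with at most `n+1` generators is affinely
equivalent to `C_n + [-y, y]` for some `y ∈ [0,1]ⁿ`, where `C_n = ∑ [-eᵢ, eᵢ]`. -/
theorem zonotope_n_add_one_generators_normal_form (n : ℕ) (hn : 1 ≤ n)
    (c : Fin n → ℝ) (z : Fin (n + 1) → Fin n → ℝ)
    (Z : Set (Fin n → ℝ))
    (hZ : Z = {c} + ∑ i : Fin (n + 1), segment ℝ (-(z i)) (z i))
    (hint : (interior Z).Nonempty) :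
    ∃ y : Fin n → ℝ, (∀ i, y i ∈ Set.Icc (0 : ℝ) 1) ∧
      ∃ f : (Fin n → ℝ) ≃ᵃ[ℝ] (Fin n → ℝ),
        f '' ((∑ i : Fin n, segment ℝ (-(Pi.single i 1)) (Pi.single i 1)) +
          segment ℝ (-y) y) = Z := by
  classical
  -- Step 1: the generators span ℝⁿ
  have hspan : Submodule.span ℝ (Set.range z) = ⊤ := by
    by_contra h
    set p := Submodule.span ℝ (Set.range z) with hp
    have hsub : (∑ i : Fin (n + 1), segment ℝ (-(z i)) (z i)) ⊆ (p : Set _) := by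
      refine sum_sets_subset_submodule _ _ _ fun i _ x hx => ?_
      obtain ⟨a, b, _, _, _, rfl⟩ := hx
      have hzi : z i ∈ p := Submodule.subset_span ⟨i, rfl⟩
      exact p.add_mem (p.smul_mem _ (p.neg_mem hzi)) (p.smul_mem _ hzi)
    have hZ' : Z = (Homeomorph.addLeft c) '' (∑ i : Fin (n + 1), segment ℝ (-(z i)) (z i)) := by
      rw [hZ, Set.singleton_add]; rfl
    obtain ⟨x, hx⟩ := hint
    rw [hZ', ← Homeomorph.image_interior] at hx
    obtain ⟨x', hx', -⟩ := hx
    have : (interior (p : Set (Fin n → ℝ))).Nonempty := ⟨x', interior_mono hsub hx'⟩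
    exact h (p.eq_top_of_nonempty_interior' this)
  have hfr : Module.finrank ℝ (Fin n → ℝ) = n := by
    simp [Module.finrank_pi]
  -- Step 2: a nontrivial linear dependence
  have hnli : ¬ LinearIndependent ℝ z := by
    intro hli
    have := hli.fintype_card_le_finrank
    rw [hfr, Fintype.card_fin] at this
    omega
  obtain ⟨g, hg, i0, hgi0⟩ := Fintype.not_linearIndependent_iff.mp hnli
  -- Step 3: index with maximal |coefficient|
  obtain ⟨im, hmax⟩ := Finite.exists_max fun i => |g i|
  have hgm : g im ≠ 0 := by
    intro h0
    have := hmax i0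
    rw [h0, abs_zero] at this
    exact hgi0 (abs_eq_zero.mp (le_antisymm this (abs_nonneg _)))
  -- Step 4: the other n generators form a basis
  set w : Fin n → (Fin n → ℝ) := fun j => z (im.succAbove j) with hw
  rw [Fin.sum_univ_succAbove (fun i => g i • z i) im] at hg
  have hkey : g im • z im = ∑ j, (-(g (im.succAbove j))) • w j := by
    have := hg
    rw [add_eq_zero_iff_eq_neg] at this
    rw [this, ← Finset.sum_neg_distrib]
    exact Finset.sum_congr rfl fun j _ => (neg_smul _ _).symm
  set lam : Fin n → ℝ := fun j => -(g (im.succAbove j)) / g im with hlam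
  have hzim : z im = ∑ j, lam j • w j := by
    have h1 : z im = (g im)⁻¹ • (g im • z im) := by
      rw [smul_smul, inv_mul_cancel₀ hgm, one_smul]
    rw [h1, hkey, Finset.smul_sum]
    refine Finset.sum_congr rfl fun j _ => ?_
    show (g im)⁻¹ • (-g (im.succAbove j) • w j) = (-g (im.succAbove j) / g im) • w j
    rw [smul_smul, div_eq_inv_mul]
  have hlam1 : ∀ j, |lam j| ≤ 1 := by
    intro j
    rw [hlam, abs_div, abs_neg, div_le_one (abs_pos.2 hgm)]
    exact hmax _
  have hsp : ⊤ ≤ Submodule.span ℝ (Set.range w) := by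
    rw [← hspan]
    refine Submodule.span_le.2 ?_
    rintro _ ⟨i, rfl⟩
    by_cases hi : i = im
    · subst hi
      rw [hzim]
      exact Submodule.sum_mem _ fun j _ =>
        Submodule.smul_mem _ _ (Submodule.subset_span ⟨j, rfl⟩)
    · obtain ⟨j, rfl⟩ := Fin.exists_succAbove_eq hi
      exact Submodule.subset_span ⟨j, rfl⟩
  have hcard : Fintype.card (Fin n) = Module.finrank ℝ (Fin n → ℝ) := by
    rw [hfr, Fintype.card_fin]
  let B0 := basisOfTopLeSpanOfCardEqFinrank w hsp hcard
  have hB0 : ∀ j, B0 j = w j := fun j =>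
    congrFun (coe_basisOfTopLeSpanOfCardEqFinrank w hsp hcard) j
  -- sign adjustment
  let sg : Fin n → ℝˣ := fun j => if 0 ≤ lam j then 1 else -1
  let B := B0.unitsSMul sg
  have hB : ∀ j, B j = (sg j : ℝ) • w j := by
    intro j
    rw [Module.Basis.unitsSMul_apply, hB0, Units.smul_def]
  refine ⟨fun j => |lam j|, fun j => ⟨abs_nonneg _, hlam1 j⟩, ?_⟩
  set y : Fin n → ℝ := fun j => |lam j| with hy
  have hyB : ∀ j, y j • B j = lam j • w j := by
    intro j
    rw [hB]
    by_cases h : 0 ≤ lam j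
    · simp only [sg, if_pos h, Units.val_one, one_smul, hy]
      rw [abs_of_nonneg h]
    · simp only [sg, if_neg h, Units.val_neg, Units.val_one, hy]
      rw [abs_of_neg (lt_of_not_ge h), smul_smul]
      ring_nf
  set e := B.equivFun.symm with he
  have hey : e y = z im := by
    rw [he, Module.Basis.equivFun_symm_apply, hzim]
    exact Finset.sum_congr rfl fun j _ => hyB j
  have hesingle : ∀ j, e (Pi.single j (1 : ℝ)) = B j := by
    intro j
    rw [he, Module.Basis.equivFun_symm_apply]
    simp [Pi.single_apply, ite_smul]
  -- the affine equivalence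
  refine ⟨(e.toAffineEquiv).trans (AffineEquiv.constVAdd ℝ (Fin n → ℝ) c), ?_⟩
  have hfc : ⇑((e.toAffineEquiv).trans (AffineEquiv.constVAdd ℝ (Fin n → ℝ) c))
      = (fun v => c + v) ∘ ⇑e := by
    funext x
    simp [AffineEquiv.trans_apply, AffineEquiv.constVAdd_apply]
  rw [hfc, Set.image_comp]
  -- image under the linear equivalence
  have himseg : ∀ a b : Fin n → ℝ, ⇑e '' segment ℝ a b = segment ℝ (e a) (e b) := by
    intro a b
    have := image_segment ℝ (e.toLinearMap.toAffineMap) a b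
    simpa using this
  have hecoe : ⇑e = ⇑(e.toLinearMap) := rfl
  have himC : ⇑e '' ((∑ i : Fin n, segment ℝ (-(Pi.single i 1)) (Pi.single i 1)) +
      segment ℝ (-y) y)
      = (∑ i : Fin n, segment ℝ (-(w i)) (w i)) + segment ℝ (-(z im)) (z im) := by
    rw [hecoe, Set.image_add, Set.image_finset_sum, ← hecoe]
    congr 1
    · refine Finset.sum_congr rfl fun j _ => ?_
      rw [himseg, map_neg, hesingle]
      by_cases h : 0 ≤ lam j
      · rw [hB]; simp only [sg, if_pos h, Units.val_one, one_smul]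
      · rw [hB]; simp only [sg, if_neg h, Units.val_neg, Units.val_one, neg_smul, one_smul]
        rw [neg_neg, segment_symm]
    · rw [himseg, map_neg, hey]
  rw [himC]
  -- reassemble
  rw [hZ, Fin.sum_univ_succAbove (fun i => segment ℝ (-(z i)) (z i)) im]
  rw [← Set.singleton_add]
  rw [add_comm (segment ℝ (-(z im)) (z im))]
end
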